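/- Suppose f : ℝ² → 𝔽² preserves every distance d > 0 with d² rational. Then for all A, B, C, D ∈ ℝ² with B - A = D - C, one has f(B) - f(A) = f(D) - f(C); i.e., f preserves parallelogram (equal-vector) relations. -/

import Mathlib

lemma iso_aux {F : Type*} [Field F] (a b₁ b₂ e₁ e₂ : F)
    (hiso : e₁^2 + e₂^2 = 0) (hperp : b₁*e₁ + b₂*e₂ = 0)
    (hb : b₁^2 + b₂^2 = a) (ha : a ≠ 0) : e₁ = 0 ∧ e₂ = 0 := by
  have h1 : a * e₁^2 = 0 := by
    linear_combination (b₁*e₁ - b₂*e₂) * hperp + b₂^2 * hiso - e₁^2 * hb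
  have h2 : a * e₂^2 = 0 := by
    linear_combination (b₂*e₂ - b₁*e₁) * hperp + b₁^2 * hiso - e₂^2 * hb
  exact ⟨pow_eq_zero_iff two_ne_zero |>.mp ((mul_eq_zero.mp h1).resolve_left ha),
    pow_eq_zero_iff two_ne_zero |>.mp ((mul_eq_zero.mp h2).resolve_left ha)⟩

lemma eq_of_rows {F : Type*} [Field F] [CharZero F] (a b₁ b₂ e₁ e₂ : F)
    (h0 : b₁^2 + b₂^2 = a) (h1 : (b₁+e₁)^2 + (b₂+e₂)^2 = a)
    (h2 : (b₁+2*e₁)^2 + (b₂+2*e₂)^2 = a) (ha : a ≠ 0) : e₁ = 0 ∧ e₂ = 0 := by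
  have hiso : e₁^2 + e₂^2 = 0 := by
    have h4 : 2*(e₁^2 + e₂^2) = 0 := by linear_combination h0 + h2 - 2*h1
    exact (mul_eq_zero.mp h4).resolve_left two_ne_zero
  have hperp : b₁*e₁ + b₂*e₂ = 0 := by
    have h5 : 2*(b₁*e₁ + b₂*e₂) = 0 := by linear_combination h1 - h0 - hiso
    exact (mul_eq_zero.mp h5).resolve_left two_ne_zero
  exact iso_aux a b₁ b₂ e₁ e₂ hiso hperp h0 ha

lemma eq_of_three {F : Type*} [Field F] [CharZero F] (a w₁ w₂ z₁ z₂ : F)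
    (h1 : w₁^2 + w₂^2 = a) (h2 : z₁^2 + z₂^2 = a)
    (h3 : (w₁+z₁)^2 + (w₂+z₂)^2 = 4*a) (ha : a ≠ 0) : z₁ = w₁ ∧ z₂ = w₂ := by
  have hiso : (z₁-w₁)^2 + (z₂-w₂)^2 = 0 := by linear_combination 2*h1 + 2*h2 - h3
  have hperp : w₁*(z₁-w₁) + w₂*(z₂-w₂) = 0 := by
    have h5 : 2*(w₁*(z₁-w₁) + w₂*(z₂-w₂)) = 0 := by linear_combination h3 - h2 - 3*h1
    exact (mul_eq_zero.mp h5).resolve_left two_ne_zero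
  obtain ⟨he1, he2⟩ := iso_aux a w₁ w₂ (z₁-w₁) (z₂-w₂) hiso hperp h1 ha
  exact ⟨by linear_combination he1, by linear_combination he2⟩

section
variable {F : Type*} [Field F] [Algebra ℝ F]

lemma step_rat (f : ℝ × ℝ → F × F)
    (hf : ∀ d : ℝ, 0 < d → (∃ q : ℚ, (q : ℝ) = d ^ 2) →
      ∀ x y : ℝ × ℝ, Real.sqrt ((x.1 - y.1) ^ 2 + (x.2 - y.2) ^ 2) = d →
        ((f x).1 - (f y).1) ^ 2 + ((f x).2 - (f y).2) ^ 2 = algebraMap ℝ F (d ^ 2))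
    (x y : ℝ × ℝ) (q : ℚ) (hq : 0 < q)
    (hxy : (x.1 - y.1)^2 + (x.2 - y.2)^2 = (q : ℝ)) :
    ((f x).1 - (f y).1) ^ 2 + ((f x).2 - (f y).2) ^ 2 = algebraMap ℝ F (q : ℝ) := by
  have hq' : (0:ℝ) < (q:ℝ) := by exact_mod_cast hq
  have hd : (0:ℝ) < Real.sqrt q := Real.sqrt_pos.mpr hq'
  have h2 : (Real.sqrt q)^2 = (q:ℝ) := Real.sq_sqrt hq'.le
  have := hf (Real.sqrt q) hd ⟨q, h2.symm⟩ x y (by rw [hxy])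
  rwa [h2] at this

lemma amap_ne_zero (q : ℚ) (hq : 0 < q) : algebraMap ℝ F (q:ℝ) ≠ 0 := by
  intro hc
  have : ((q:ℝ)) = 0 := (algebraMap ℝ F).injective (by rw [hc, map_zero])
  exact_mod_cast hq.ne' (by exact_mod_cast this)

lemma collinear_lem (f : ℝ × ℝ → F × F)
    (hf : ∀ d : ℝ, 0 < d → (∃ q : ℚ, (q : ℝ) = d ^ 2) →
      ∀ x y : ℝ × ℝ, Real.sqrt ((x.1 - y.1) ^ 2 + (x.2 - y.2) ^ 2) = d →
        ((f x).1 - (f y).1) ^ 2 + ((f x).2 - (f y).2) ^ 2 = algebraMap ℝ F (d ^ 2))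
    (p w : ℝ × ℝ) (q : ℚ) (hq : 0 < q) (hw : w.1^2 + w.2^2 = (q:ℝ)) :
    f (p+w+w) - f (p+w) = f (p+w) - f p := by
  haveI : CharZero F := charZero_of_injective_algebraMap (algebraMap ℝ F).injective
  have h01 := step_rat f hf (p+w) p q hq
    (by simp only [Prod.fst_add, Prod.snd_add]; linear_combination hw)
  have h12 := step_rat f hf (p+w+w) (p+w) q hq
    (by simp only [Prod.fst_add, Prod.snd_add]; linear_combination hw)
  have h02 := step_rat f hf (p+w+w) p (4*q) (by positivity)
    (by simp only [Prod.fst_add, Prod.snd_add]; push_cast; linear_combination 4*hw)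
  have h02' : ((f (p+w)).1 - (f p).1 + ((f (p+w+w)).1 - (f (p+w)).1))^2
      + ((f (p+w)).2 - (f p).2 + ((f (p+w+w)).2 - (f (p+w)).2))^2
      = 4 * algebraMap ℝ F (q:ℝ) := by
    have hm : algebraMap ℝ F ((4*q:ℚ):ℝ) = 4 * algebraMap ℝ F (q:ℝ) := by
      rw [show ((4*q:ℚ):ℝ) = 4*(q:ℝ) by push_cast; ring, map_mul, map_ofNat]
    rw [← hm]; linear_combination h02
  obtain ⟨hz1, hz2⟩ := eq_of_three (algebraMap ℝ F (q:ℝ))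
    ((f (p+w)).1 - (f p).1) ((f (p+w)).2 - (f p).2)
    ((f (p+w+w)).1 - (f (p+w)).1) ((f (p+w+w)).2 - (f (p+w)).2)
    h01 h12 h02' (amap_ne_zero q hq)
  exact Prod.ext (by simpa using hz1) (by simpa using hz2)

lemma grid_lem (f : ℝ × ℝ → F × F)
    (hf : ∀ d : ℝ, 0 < d → (∃ q : ℚ, (q : ℝ) = d ^ 2) →
      ∀ x y : ℝ × ℝ, Real.sqrt ((x.1 - y.1) ^ 2 + (x.2 - y.2) ^ 2) = d →
        ((f x).1 - (f y).1) ^ 2 + ((f x).2 - (f y).2) ^ 2 = algebraMap ℝ F (d ^ 2))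
    (x u v : ℝ × ℝ) (qu qv : ℚ) (hqu : 0 < qu) (hqv : 0 < qv)
    (hu : u.1^2 + u.2^2 = (qu:ℝ)) (hv : v.1^2 + v.2^2 = (qv:ℝ)) :
    f (x+u+v) - f (x+v) = f (x+u) - f x := by
  haveI : CharZero F := charZero_of_injective_algebraMap (algebraMap ℝ F).injective
  have col0 := collinear_lem f hf x v qv hqv hv
  have col1 := collinear_lem f hf (x+u) v qv hqv hv
  have r0 := step_rat f hf (x+u) x qu hqu
    (by simp only [Prod.fst_add, Prod.snd_add]; linear_combination hu)
  have r1 := step_rat f hf (x+u+v) (x+v) qu hqu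
    (by simp only [Prod.fst_add, Prod.snd_add]; linear_combination hu)
  have r2 := step_rat f hf (x+u+v+v) (x+v+v) qu hqu
    (by simp only [Prod.fst_add, Prod.snd_add]; linear_combination hu)
  have e0 : f (x+v+v) = f (x+v) + (f (x+v) - f x) := by rw [← col0]; abel
  have e1 : f (x+u+v+v) = f (x+u+v) + (f (x+u+v) - f (x+u)) := by rw [← col1]; abel
  rw [e0, e1] at r2
  simp only [Prod.fst_add, Prod.snd_add, Prod.fst_sub, Prod.snd_sub] at r2
  obtain ⟨he1, he2⟩ := eq_of_rows (algebraMap ℝ F (qu:ℝ))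
    ((f (x+u)).1 - (f x).1) ((f (x+u)).2 - (f x).2)
    (((f (x+u+v)).1 - (f (x+v)).1) - ((f (x+u)).1 - (f x).1))
    (((f (x+u+v)).2 - (f (x+v)).2) - ((f (x+u)).2 - (f x).2))
    r0 (by linear_combination r1) (by linear_combination r2) (amap_ne_zero qu hqu)
  exact Prod.ext (by simp only [Prod.fst_sub]; linear_combination he1)
    (by simp only [Prod.snd_sub]; linear_combination he2)

lemma decomp (z : ℝ × ℝ) (hz : z ≠ 0) :
    ∃ (w : ℝ × ℝ) (q : ℚ), 0 < q ∧ w.1^2 + w.2^2 = (q:ℝ) ∧ (z-w).1^2 + (z-w).2^2 = (q:ℝ) := by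
  have h0 : z.1 ≠ 0 ∨ z.2 ≠ 0 := by
    by_contra hcon; push_neg at hcon; exact hz (Prod.ext hcon.1 hcon.2)
  have hn : 0 < z.1^2 + z.2^2 := by rcases h0 with h | h <;> positivity
  obtain ⟨q, hq⟩ := exists_rat_gt (z.1^2 + z.2^2)
  have hqpos : 0 < q := by exact_mod_cast hn.trans hq
  have harg : 0 ≤ ((q:ℝ) - (z.1^2 + z.2^2)/4)/(z.1^2 + z.2^2) :=
    div_nonneg (by linarith) hn.le
  have ht : (Real.sqrt (((q:ℝ) - (z.1^2 + z.2^2)/4)/(z.1^2 + z.2^2)))^2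
      = ((q:ℝ) - (z.1^2 + z.2^2)/4)/(z.1^2 + z.2^2) := Real.sq_sqrt harg
  set t := Real.sqrt (((q:ℝ) - (z.1^2 + z.2^2)/4)/(z.1^2 + z.2^2)) with htdef
  have key : t^2 * (z.1^2 + z.2^2) = (q:ℝ) - (z.1^2 + z.2^2)/4 := by
    rw [ht]; field_simp
  refine ⟨(z.1/2 - t*z.2, z.2/2 + t*z.1), q, hqpos, ?_, ?_⟩
  · show (z.1/2 - t*z.2)^2 + (z.2/2 + t*z.1)^2 = (q:ℝ)
    linear_combination key
  · have e1 : (z - (z.1/2 - t*z.2, z.2/2 + t*z.1)).1 = z.1/2 + t*z.2 := by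
      simp [Prod.fst_sub]; ring
    have e2 : (z - (z.1/2 - t*z.2, z.2/2 + t*z.1)).2 = z.2/2 - t*z.1 := by
      simp [Prod.snd_sub]; ring
    rw [e1, e2]; linear_combination key

end

/-- `f : ℝ² → 𝔽²` preserves every distance `d > 0` with `d²` rational
(`|x-y| = d` implies `φ (f x) (f y) = d²`). -/
theorem stmt_9 {F : Type*} [Field F] [Algebra ℝ F]
    (f : ℝ × ℝ → F × F)
    (hf : ∀ d : ℝ, 0 < d → (∃ q : ℚ, (q : ℝ) = d ^ 2) →
      ∀ x y : ℝ × ℝ, Real.sqrt ((x.1 - y.1) ^ 2 + (x.2 - y.2) ^ 2) = d →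
        ((f x).1 - (f y).1) ^ 2 + ((f x).2 - (f y).2) ^ 2 = algebraMap ℝ F (d ^ 2))
    (A B C D : ℝ × ℝ) (h : B - A = D - C) :
    f B - f A = f D - f C := by
  by_cases hBA : B = A
  · have hDC : D = C := by
      have h' := h
      rw [hBA, sub_self] at h'
      exact sub_eq_zero.mp h'.symm
    rw [hBA, hDC, sub_self, sub_self]
  · by_cases hCA : C = A
    · have hDB : D = B := by
        rw [hCA] at h
        exact (sub_left_inj.mp h).symm
      rw [hCA, hDB]
    · obtain ⟨v₁, qv, hqv, hv₁, hv₂⟩ := decomp (B - A) (sub_ne_zero.mpr hBA)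
      obtain ⟨u₁, qu, hqu, hu₁, hu₂⟩ := decomp (C - A) (sub_ne_zero.mpr hCA)
      have inv : ∀ (s : ℝ × ℝ) (qs : ℚ), 0 < qs → s.1^2 + s.2^2 = (qs:ℝ) → ∀ y : ℝ × ℝ,
          f (y+s+(B-A)) - f (y+s) = f (y+(B-A)) - f y := by
        intro s qs hqs hs y
        have g1 := grid_lem f hf y v₁ s qv qs hqv hqs hv₁ hs
        have g2 := grid_lem f hf (y+v₁) (B-A-v₁) s qv qs hqv hqs hv₂ hs
        have p1 : y+v₁+(B-A-v₁)+s = y+s+(B-A) := by ring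
        have p2 : y+v₁+(B-A-v₁) = y+(B-A) := by ring
        have p3 : y+v₁+s+s = y+v₁+s+s := rfl
        rw [p2] at g2
        rw [show y+(B-A)+s = y+s+(B-A) by ring] at g2
        linear_combination g1 + g2
      have i2 := inv (C-A-u₁) qu hqu hu₂ (A+u₁)
      have i1 := inv u₁ qu hqu hu₁ A
      rw [show A+u₁+(C-A-u₁) = C by ring] at i2
      rw [show C+(B-A) = D by rw [h]; ring] at i2
      rw [show A+(B-A) = B by ring] at i1
      exact (i2.trans i1).symm
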